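/- Let G be a group, let A, B ⊆ G be finite subsets, and let ε ∈ (0,1). Suppose S ⊆ G is a finite nonempty set such that |S·A| ≤ K|A|. Then there exists a set T ⊆ S⁻¹ of size |T| ≥ |S|/(2K)^{9/ε²} such that for every t ∈ T·T⁻¹, Σ_{x∈G} |1_A*1_B(tx) - 1_A*1_B(x)|² ≤ ε²|A|²|B|. -/

import Mathlib

open Finset Pointwise

private lemma sum_zero_outside {G : Type*} [DecidableEq G] (Ω W : Finset G) (F : G → ℝ)
    (h0 : ∀ y ∉ W, F y = 0) (hnn : ∀ y, 0 ≤ F y) :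
    ∑ y ∈ Ω, F y ≤ ∑ y ∈ W, F y := by
  calc ∑ y ∈ Ω, F y = ∑ y ∈ Ω ∩ W, F y := by
        refine (Finset.sum_subset Finset.inter_subset_left ?_).symm
        exact fun y hy hny => h0 y fun hw => hny (Finset.mem_inter.2 ⟨hy, hw⟩)
    _ ≤ ∑ y ∈ W, F y :=
        Finset.sum_le_sum_of_subset_of_nonneg Finset.inter_subset_right fun y _ _ => hnn y

private lemma sum_piFinset_sq {G : Type*} [DecidableEq G] (k : ℕ) (A : Finset G) (h : G → ℝ)
    (hsum : ∑ a ∈ A, h a = 0) :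
    ∑ c ∈ Fintype.piFinset (fun _ : Fin k => A), (∑ i, h (c i)) ^ 2
      = (k : ℝ) * (A.card : ℝ) ^ (k - 1) * ∑ a ∈ A, h a ^ 2 := by
  have key : ∀ i j : Fin k,
      ∑ c ∈ Fintype.piFinset (fun _ : Fin k => A), h (c i) * h (c j)
        = if j = i then (A.card : ℝ) ^ (k - 1) * ∑ a ∈ A, h a ^ 2 else 0 := by
    intro i j
    by_cases hij : j = i
    · subst hij
      rw [if_pos rfl]
      have e1 : ∀ c : Fin k → G, h (c j) * h (c j)
          = ∏ m : Fin k, (if m = j then h (c m) ^ 2 else 1) := by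
        intro c
        rw [Finset.prod_ite_eq' Finset.univ j (fun m => h (c m) ^ 2), if_pos (Finset.mem_univ j)]
        ring
      simp_rw [e1]
      rw [← Finset.prod_univ_sum (fun _ : Fin k => A)
        (fun m a => if m = j then h a ^ 2 else 1)]
      have e2 : ∀ m : Fin k, (∑ a ∈ A, if m = j then h a ^ 2 else 1)
          = if m = j then ∑ a ∈ A, h a ^ 2 else (A.card : ℝ) := by
        intro m
        split <;> simp
      simp_rw [e2]
      rw [← Finset.mul_prod_erase Finset.univ _ (Finset.mem_univ j), if_pos rfl]
      rw [Finset.prod_congr rfl (fun m hm => if_neg (Finset.mem_erase.1 hm).1),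
        Finset.prod_const, Finset.card_erase_of_mem (Finset.mem_univ j), Finset.card_univ,
        Fintype.card_fin]
      ring
    · rw [if_neg hij]
      have e1 : ∀ c : Fin k → G, h (c i) * h (c j)
          = ∏ m : Fin k, (if m = i then h (c m) else if m = j then h (c m) else 1) := by
        intro c
        rw [← Finset.mul_prod_erase Finset.univ _ (Finset.mem_univ i), if_pos rfl]
        have hj : j ∈ Finset.univ.erase i := Finset.mem_erase.2 ⟨hij, Finset.mem_univ j⟩
        rw [← Finset.mul_prod_erase _ _ hj, if_neg hij, if_pos rfl]
        rw [Finset.prod_congr rfl (fun m hm => ?_), Finset.prod_const_one, mul_one]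
        have hm' := Finset.mem_erase.1 hm
        have hm'' := Finset.mem_erase.1 hm'.2
        rw [if_neg hm''.1, if_neg hm'.1]
      simp_rw [e1]
      rw [← Finset.prod_univ_sum (fun _ : Fin k => A)
        (fun m a => if m = i then h a else if m = j then h a else 1)]
      apply Finset.prod_eq_zero (Finset.mem_univ i)
      simp [hsum]
  have expand : ∀ c : Fin k → G, (∑ i, h (c i)) ^ 2 = ∑ i : Fin k, ∑ j : Fin k, h (c i) * h (c j) := by
    intro c
    rw [sq, Finset.sum_mul_sum]
  simp_rw [expand]
  rw [Finset.sum_comm]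
  have : ∀ i : Fin k, ∑ c ∈ Fintype.piFinset (fun _ : Fin k => A), ∑ j : Fin k, h (c i) * h (c j)
      = (A.card : ℝ) ^ (k - 1) * ∑ a ∈ A, h a ^ 2 := by
    intro i
    rw [Finset.sum_comm]
    simp_rw [key]
    simp
  simp_rw [this]
  rw [Finset.sum_const, Finset.card_univ, Fintype.card_fin, nsmul_eq_mul]
  ring

set_option maxHeartbeats 2000000 in
theorem stmt16 {G : Type*} [Group G] [DecidableEq G] (A B S : Finset G)
    (hA : A.Nonempty) (hB : B.Nonempty) (hS : S.Nonempty) (ε K : ℝ)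
    (hε0 : 0 < ε) (hε1 : ε < 1)
    (hK : (((S * A).card : ℝ)) ≤ K * A.card) :
    ∃ T : Finset G, T ⊆ S⁻¹ ∧
      (S.card : ℝ) / (2 * K) ^ ((9 : ℝ) / ε ^ 2) ≤ T.card ∧
      ∀ t ∈ T * T⁻¹,
        ∑ x ∈ (t⁻¹ • (A * B)) ∪ (A * B),
            ((((A ×ˢ B).filter (fun p => p.1 * p.2 = t * x)).card : ℝ)
              - (((A ×ˢ B).filter (fun p => p.1 * p.2 = x)).card : ℝ)) ^ 2
          ≤ ε ^ 2 * (A.card : ℝ) ^ 2 * (B.card : ℝ) := by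
  classical
  -- basic numerics
  set k : ℕ := ⌈(8 : ℝ) / ε ^ 2⌉₊ with hk_def
  have hε2 : (0 : ℝ) < ε ^ 2 := by positivity
  have hk8 : (8 : ℝ) / ε ^ 2 ≤ k := Nat.le_ceil _
  have hkpos : 0 < k := Nat.ceil_pos.2 (by positivity)
  have hkR : (0 : ℝ) < k := by exact_mod_cast hkpos
  have hk9 : (k : ℝ) ≤ 9 / ε ^ 2 := by
    have h1 : (k : ℝ) < 8 / ε ^ 2 + 1 := Nat.ceil_lt_add_one (by positivity)
    have h2 : (1 : ℝ) ≤ 1 / ε ^ 2 := by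
      rw [le_div_iff₀ hε2]; nlinarith
    have h3 : (9 : ℝ) / ε ^ 2 = 8 / ε ^ 2 + 1 / ε ^ 2 := by ring
    linarith
  have hA0 : (0 : ℝ) < A.card := by exact_mod_cast Finset.card_pos.2 hA
  have hB0 : (0 : ℝ) < B.card := by exact_mod_cast Finset.card_pos.2 hB
  have hS0 : (0 : ℝ) < S.card := by exact_mod_cast Finset.card_pos.2 hS
  have hSA : (A.card : ℝ) ≤ (S * A).card := by
    exact_mod_cast Finset.card_le_card_mul_left hS
  have hK1 : (1 : ℝ) ≤ K := by
    nlinarith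
  -- the functions
  set f : G → ℝ := fun x => (((A ×ˢ B).filter fun p => p.1 * p.2 = x).card : ℝ) with hf_def
  set ind : G → ℝ := fun y => if y ∈ B then 1 else 0 with hind_def
  have hf_eq : ∀ x, f x = ∑ a ∈ A, ind (a⁻¹ * x) := by
    intro x
    rw [hf_def]
    simp only
    rw [Finset.card_filter]
    push_cast
    rw [Finset.sum_product]
    refine Finset.sum_congr rfl fun a _ => ?_
    simp_rw [← eq_inv_mul_iff_mul_eq]
    rw [Finset.sum_ite_eq' B (a⁻¹ * x) (fun _ => (1 : ℝ))]
  set g : (Fin k → G) → G → ℝ := fun c x => ((A.card : ℝ) / k) * ∑ i, ind ((c i)⁻¹ * x)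
    with hg_def
  have hind_nonneg : ∀ y, 0 ≤ ind y := by
    intro y; rw [hind_def]; dsimp only; split <;> norm_num
  have hf_nonneg : ∀ x, 0 ≤ f x := fun x => by rw [hf_def]; positivity
  have hind_mem : ∀ (a x : G), a ∈ A → x ∉ A * B → ind (a⁻¹ * x) = 0 := by
    intro a x ha hx
    rw [hind_def]
    dsimp only
    rw [if_neg]
    intro hb
    have := Finset.mul_mem_mul ha hb
    rw [mul_inv_cancel_left] at this
    exact hx this
  have hf_supp : ∀ x ∉ A * B, f x = 0 := fun x hx => by
    rw [hf_eq]; exact Finset.sum_eq_zero fun a ha => hind_mem a x ha hx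
  set Pk : Finset (Fin k → G) := Fintype.piFinset (fun _ : Fin k => A) with hPk
  have hg_supp : ∀ c ∈ Pk, ∀ x ∉ A * B, g c x = 0 := by
    intro c hc x hx
    rw [hg_def]
    dsimp only
    rw [Finset.sum_eq_zero, mul_zero]
    intro i _
    exact hind_mem (c i) x (Fintype.mem_piFinset.1 hc i) hx
  -- second moment bound per point
  have hxbound : ∀ x : G, ∑ c ∈ Pk, (g c x - f x) ^ 2 ≤ (A.card : ℝ) ^ (k + 1) / k * f x := by
    intro x
    set μ : ℝ := f x / A.card with hμ
    set h : G → ℝ := fun a => ind (a⁻¹ * x) - μ with hh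
    have hsum : ∑ a ∈ A, h a = 0 := by
      rw [hh]
      dsimp only
      rw [Finset.sum_sub_distrib, Finset.sum_const, nsmul_eq_mul, ← hf_eq, hμ]
      field_simp
      ring
    have hrepr : ∀ c : Fin k → G, g c x - f x = ((A.card : ℝ) / k) * ∑ i, h (c i) := by
      intro c
      rw [hg_def, hh]
      dsimp only
      rw [Finset.sum_sub_distrib, Finset.sum_const, Finset.card_univ, Fintype.card_fin,
        nsmul_eq_mul, hμ]
      field_simp
    have hind01 : ∀ a : G, ind (a⁻¹ * x) ^ 2 = ind (a⁻¹ * x) := by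
      intro a; rw [hind_def]; dsimp only; split <;> norm_num
    have hh2 : ∑ a ∈ A, h a ^ 2 ≤ f x := by
      have e0 : ∀ a : G, h a ^ 2 = ind (a⁻¹ * x) - 2 * μ * ind (a⁻¹ * x) + μ ^ 2 := by
        intro a
        rw [hh]
        dsimp only
        rw [sub_sq, hind01 a]
        ring
      have e : ∑ a ∈ A, h a ^ 2 = f x - (f x) ^ 2 / A.card := by
        simp_rw [e0]
        rw [Finset.sum_add_distrib, Finset.sum_sub_distrib, ← Finset.mul_sum, ← hf_eq,
          Finset.sum_const, nsmul_eq_mul, hμ]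
        field_simp
        ring
      rw [e]
      have h0 : 0 ≤ (f x) ^ 2 / A.card := by positivity
      linarith
    simp_rw [hrepr, mul_pow]
    rw [← Finset.mul_sum, sum_piFinset_sq k A h hsum]
    have hpow : (A.card : ℝ) ^ (k - 1) * (A.card : ℝ) ^ 2 = (A.card : ℝ) ^ (k + 1) := by
      rw [← pow_add]; congr 1; omega
    calc ((A.card : ℝ) / k) ^ 2 * ((k : ℝ) * (A.card : ℝ) ^ (k - 1) * ∑ a ∈ A, h a ^ 2)
        = (A.card : ℝ) ^ (k + 1) / k * ∑ a ∈ A, h a ^ 2 := by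
          rw [← hpow]; field_simp
      _ ≤ (A.card : ℝ) ^ (k + 1) / k * f x := by
          exact mul_le_mul_of_nonneg_left hh2 (by positivity)
  -- sum of f over A*B
  have hsumAB : ∑ x ∈ A * B, f x = (A.card : ℝ) * B.card := by
    have hN : ∑ x ∈ A * B, ((A ×ˢ B).filter fun p => p.1 * p.2 = x).card = (A ×ˢ B).card := by
      refine (Finset.card_eq_sum_card_fiberwise fun p hp => ?_).symm
      obtain ⟨h1, h2⟩ := Finset.mem_product.1 hp
      exact Finset.mul_mem_mul h1 h2
    rw [hf_def]
    dsimp only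
    rw [← Nat.cast_sum, hN, Finset.card_product]
    push_cast
    ring
  set thr : ℝ := ε ^ 2 * (A.card : ℝ) ^ 2 * B.card / 4 with hthr
  have hthr0 : 0 < thr := by rw [hthr]; positivity
  -- total second moment
  have hM : ∑ c ∈ Pk, ∑ x ∈ A * B, (g c x - f x) ^ 2
      ≤ (A.card : ℝ) ^ k * (ε ^ 2 * (A.card : ℝ) ^ 2 * B.card / 8) := by
    calc ∑ c ∈ Pk, ∑ x ∈ A * B, (g c x - f x) ^ 2
        = ∑ x ∈ A * B, ∑ c ∈ Pk, (g c x - f x) ^ 2 := Finset.sum_comm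
      _ ≤ ∑ x ∈ A * B, (A.card : ℝ) ^ (k + 1) / k * f x :=
          Finset.sum_le_sum fun x _ => hxbound x
      _ = (A.card : ℝ) ^ (k + 1) / k * ((A.card : ℝ) * B.card) := by
          rw [← Finset.mul_sum, hsumAB]
      _ ≤ (A.card : ℝ) ^ k * (ε ^ 2 * (A.card : ℝ) ^ 2 * B.card / 8) := by
          have h8 : (8 : ℝ) ≤ ↑k * ε ^ 2 := by
            rw [div_le_iff₀ hε2] at hk8; linarith
          have e : (A.card : ℝ) ^ (k + 1) / k * ((A.card : ℝ) * B.card)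
              = ((A.card : ℝ) ^ k * (A.card : ℝ) ^ 2 * B.card) / k := by
            rw [pow_succ]; field_simp
          rw [e, div_le_iff₀ hkR]
          have hpos : (0:ℝ) ≤ (A.card : ℝ) ^ k * (A.card : ℝ) ^ 2 * B.card / 8 := by positivity
          calc (A.card : ℝ) ^ k * (A.card : ℝ) ^ 2 * B.card
              = ((A.card : ℝ) ^ k * (A.card : ℝ) ^ 2 * B.card / 8) * 8 := by ring
            _ ≤ ((A.card : ℝ) ^ k * (A.card : ℝ) ^ 2 * B.card / 8) * (k * ε ^ 2) :=
                mul_le_mul_of_nonneg_left h8 hpos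
            _ = (A.card : ℝ) ^ k * (ε ^ 2 * (A.card : ℝ) ^ 2 * B.card / 8) * k := by ring
  -- Markov
  set L : Finset (Fin k → G) := Pk.filter (fun c => ∑ x ∈ A * B, (g c x - f x) ^ 2 ≤ thr)
    with hLdef
  have hPkcard : (Pk.card : ℝ) = (A.card : ℝ) ^ k := by
    rw [hPk, Fintype.card_piFinset_const]; push_cast; rfl
  have hLcard : (A.card : ℝ) ^ k ≤ 2 * L.card := by
    by_contra hcon
    push_neg at hcon
    set Lc := Pk.filter (fun c => ¬ (∑ x ∈ A * B, (g c x - f x) ^ 2 ≤ thr)) with hLc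
    have hsplit : L.card + Lc.card = Pk.card := by
      rw [hLdef, hLc]
      exact Finset.card_filter_add_card_filter_not ..
    have hsplitR : (L.card : ℝ) + Lc.card = (A.card : ℝ) ^ k := by
      rw [← hPkcard]; exact_mod_cast hsplit
    have hLclow : (A.card : ℝ) ^ k < 2 * Lc.card := by linarith
    have hlow : (Lc.card : ℝ) * thr ≤ ∑ c ∈ Pk, ∑ x ∈ A * B, (g c x - f x) ^ 2 := by
      calc (Lc.card : ℝ) * thr = ∑ _c ∈ Lc, thr := by rw [Finset.sum_const, nsmul_eq_mul]
        _ ≤ ∑ c ∈ Lc, ∑ x ∈ A * B, (g c x - f x) ^ 2 :=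
            Finset.sum_le_sum fun c hc => le_of_lt (not_le.1 (Finset.mem_filter.1 hc).2)
        _ ≤ ∑ c ∈ Pk, ∑ x ∈ A * B, (g c x - f x) ^ 2 :=
            Finset.sum_le_sum_of_subset_of_nonneg (Finset.filter_subset _ _)
              fun c _ _ => Finset.sum_nonneg fun x _ => sq_nonneg _
    have hM' : ∑ c ∈ Pk, ∑ x ∈ A * B, (g c x - f x) ^ 2 ≤ (A.card : ℝ) ^ k * thr / 2 := by
      refine hM.trans (le_of_eq ?_)
      rw [hthr]; ring
    have h3' : (A.card : ℝ) ^ k * thr < 2 * Lc.card * thr :=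
      mul_lt_mul_of_pos_right hLclow hthr0
    linarith
  -- the L-property over arbitrary finsets
  have hL_any : ∀ c ∈ L, ∀ Ω : Finset G, ∑ y ∈ Ω, (g c y - f y) ^ 2 ≤ thr := by
    intro c hc Ω
    obtain ⟨hcPz, hcval⟩ := Finset.mem_filter.1 hc
    refine le_trans (sum_zero_outside Ω (A * B) _ ?_ (fun y => sq_nonneg _)) hcval
    intro y hy
    rw [hg_supp c hcPz y hy, hf_supp y hy]
    ring
  -- pigeonhole
  set PzSA : Finset (Fin k → G) := Fintype.piFinset (fun _ : Fin k => S * A) with hPzSA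
  have hPzSAne : PzSA.Nonempty := by
    obtain ⟨y, hy⟩ := hS.mul hA
    exact ⟨fun _ => y, Fintype.mem_piFinset.2 fun _ => hy⟩
  have hcount : S.card * L.card ≤ ∑ d ∈ PzSA, (S.filter (fun s => (fun i => s⁻¹ * d i) ∈ L)).card := by
    have swap : ∑ d ∈ PzSA, (S.filter (fun s => (fun i => s⁻¹ * d i) ∈ L)).card
        = ∑ s ∈ S, (PzSA.filter (fun d => (fun i => s⁻¹ * d i) ∈ L)).card := by
      simp_rw [Finset.card_filter]
      exact Finset.sum_comm
    rw [swap]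
    have hbound : ∀ s ∈ S, L.card ≤ (PzSA.filter (fun d => (fun i => s⁻¹ * d i) ∈ L)).card := by
      intro s hs
      refine Finset.card_le_card_of_injOn (fun c i => s * c i) ?_ ?_
      · intro c hc
        have hcPk : c ∈ Pk := (Finset.mem_filter.1 hc).1
        rw [Finset.mem_coe, Finset.mem_filter]
        constructor
        · rw [hPzSA, Fintype.mem_piFinset]
          intro i
          exact Finset.mul_mem_mul hs (Fintype.mem_piFinset.1 hcPk i)
        · simpa only [inv_mul_cancel_left, Finset.mem_coe] using hc
      · intro c₁ _ c₂ _ hcc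
        funext i
        exact mul_left_cancel (congrFun hcc i)
    calc S.card * L.card = ∑ _s ∈ S, L.card := by rw [Finset.sum_const, smul_eq_mul]
      _ ≤ _ := Finset.sum_le_sum hbound
  obtain ⟨d₀, hd₀, hmax⟩ := Finset.exists_max_image PzSA
    (fun d => (S.filter (fun s => (fun i => s⁻¹ * d i) ∈ L)).card) hPzSAne
  set T₀ : Finset G := S.filter (fun s => (fun i => s⁻¹ * d₀ i) ∈ L) with hT₀
  have hfib : S.card * L.card ≤ PzSA.card * T₀.card := by
    calc S.card * L.card
        ≤ ∑ d ∈ PzSA, (S.filter (fun s => (fun i => s⁻¹ * d i) ∈ L)).card := hcount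
      _ ≤ PzSA.card * T₀.card := by
          rw [← smul_eq_mul]
          exact Finset.sum_le_card_nsmul _ _ _ fun d hd => hmax d hd
  refine ⟨T₀⁻¹, Finset.inv_subset_inv (Finset.filter_subset _ _), ?_, ?_⟩
  · -- cardinality bound
    have hfibR : (S.card : ℝ) * L.card ≤ (PzSA.card : ℝ) * T₀.card := by exact_mod_cast hfib
    have hPzSAcard : (PzSA.card : ℝ) = ((S * A).card : ℝ) ^ k := by
      rw [hPzSA, Fintype.card_piFinset_const]; push_cast; rfl
    have hK0 : (0 : ℝ) < K := lt_of_lt_of_le one_pos hK1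
    have hstep : (S.card : ℝ) ≤ 2 * K ^ k * T₀.card := by
      have h1 : (S.card : ℝ) * (A.card : ℝ) ^ k ≤ (2 * K ^ k * T₀.card) * (A.card : ℝ) ^ k := by
        calc (S.card : ℝ) * (A.card : ℝ) ^ k
            ≤ (S.card : ℝ) * (2 * L.card) := mul_le_mul_of_nonneg_left hLcard hS0.le
          _ = 2 * ((S.card : ℝ) * L.card) := by ring
          _ ≤ 2 * ((PzSA.card : ℝ) * T₀.card) := by linarith
          _ ≤ 2 * ((K ^ k * (A.card : ℝ) ^ k) * T₀.card) := by
              have hp : (PzSA.card : ℝ) ≤ K ^ k * (A.card : ℝ) ^ k := by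
                rw [hPzSAcard, ← mul_pow]
                exact pow_le_pow_left₀ (by positivity) hK k
              have := mul_le_mul_of_nonneg_right hp (by positivity : (0:ℝ) ≤ (T₀.card : ℝ))
              linarith
          _ = (2 * K ^ k * T₀.card) * (A.card : ℝ) ^ k := by ring
      exact le_of_mul_le_mul_right h1 (by positivity)
    have hTcard : ((T₀⁻¹).card : ℝ) = T₀.card := by
      rw [Finset.card_inv]
    rw [hTcard]
    have hden : (0 : ℝ) < 2 * K ^ k := by positivity
    have h9 : (1 : ℝ) ≤ 9 / ε ^ 2 := by
      rw [le_div_iff₀ hε2]; nlinarith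
    have hrp : 2 * K ^ k ≤ (2 * K) ^ ((9 : ℝ) / ε ^ 2) := by
      rw [Real.mul_rpow (by norm_num) hK0.le]
      have h2' : (2 : ℝ) ≤ 2 ^ ((9 : ℝ) / ε ^ 2) := by
        calc (2 : ℝ) = 2 ^ (1 : ℝ) := (Real.rpow_one 2).symm
          _ ≤ 2 ^ ((9 : ℝ) / ε ^ 2) := Real.rpow_le_rpow_of_exponent_le one_le_two h9
      have hk' : K ^ k ≤ K ^ ((9 : ℝ) / ε ^ 2) := by
        calc K ^ k = K ^ (k : ℝ) := (Real.rpow_natCast K k).symm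
          _ ≤ K ^ ((9 : ℝ) / ε ^ 2) := Real.rpow_le_rpow_of_exponent_le hK1 hk9
      exact mul_le_mul h2' hk' (by positivity) (by positivity)
    calc (S.card : ℝ) / (2 * K) ^ ((9 : ℝ) / ε ^ 2)
        ≤ (S.card : ℝ) / (2 * K ^ k) := by
          gcongr
      _ ≤ T₀.card := by
          rw [div_le_iff₀ hden, mul_comm]
          exact hstep
  · -- almost periodicity bound
    intro t ht
    rw [Finset.mem_mul] at ht
    obtain ⟨u, hu, v, hv, huv⟩ := ht
    rw [Finset.mem_inv] at hu
    obtain ⟨s₂, hs₂, rfl⟩ := hu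
    have hv' : ∃ s₁ ∈ T₀, s₁ = v := by
      rw [Finset.mem_inv] at hv
      obtain ⟨y, hy, rfl⟩ := hv
      rw [Finset.mem_inv] at hy
      obtain ⟨z, hz, rfl⟩ := hy
      exact ⟨z, hz, (inv_inv z).symm⟩
    obtain ⟨s₁, hs₁, rfl⟩ := hv'
    subst huv
    have hc₂ : (fun i => s₂⁻¹ * d₀ i) ∈ L := (Finset.mem_filter.1 hs₂).2
    have hc₁ : (fun i => s₁⁻¹ * d₀ i) ∈ L := (Finset.mem_filter.1 hs₁).2
    set c₂ : Fin k → G := fun i => s₂⁻¹ * d₀ i with hc₂def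
    set c₁ : Fin k → G := fun i => s₁⁻¹ * d₀ i with hc₁def
    have hmid : ∀ x : G, g c₂ (s₂⁻¹ * s₁ * x) = g c₁ x := by
      intro x
      rw [hg_def]
      dsimp only
      congr 1
      refine Finset.sum_congr rfl fun i _ => ?_
      congr 1
      rw [hc₂def, hc₁def]
      dsimp only
      group
    have hfx : ∀ y : G, (((A ×ˢ B).filter fun p => p.1 * p.2 = y).card : ℝ) = f y :=
      fun y => rfl
    simp only [hfx]
    set Ω := ((s₂⁻¹ * s₁)⁻¹ • (A * B)) ∪ (A * B) with hΩ
    have hbound₂ : ∑ x ∈ Ω, (f (s₂⁻¹ * s₁ * x) - g c₂ (s₂⁻¹ * s₁ * x)) ^ 2 ≤ thr := by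
      have hinj : ∀ x ∈ Ω, ∀ y ∈ Ω, s₂⁻¹ * s₁ * x = s₂⁻¹ * s₁ * y → x = y :=
        fun x _ y _ hxy => mul_left_cancel hxy
      have him : ∑ y ∈ Ω.image (fun x => s₂⁻¹ * s₁ * x), (g c₂ y - f y) ^ 2
          = ∑ x ∈ Ω, (g c₂ (s₂⁻¹ * s₁ * x) - f (s₂⁻¹ * s₁ * x)) ^ 2 :=
        Finset.sum_image hinj
      calc ∑ x ∈ Ω, (f (s₂⁻¹ * s₁ * x) - g c₂ (s₂⁻¹ * s₁ * x)) ^ 2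
          = ∑ x ∈ Ω, (g c₂ (s₂⁻¹ * s₁ * x) - f (s₂⁻¹ * s₁ * x)) ^ 2 := by
            refine Finset.sum_congr rfl fun y _ => ?_
            ring
        _ = ∑ y ∈ Ω.image (fun x => s₂⁻¹ * s₁ * x), (g c₂ y - f y) ^ 2 := him.symm
        _ ≤ thr := hL_any c₂ hc₂ _
    have hbound₁ : ∑ x ∈ Ω, (g c₁ x - f x) ^ 2 ≤ thr := hL_any c₁ hc₁ Ω
    calc ∑ x ∈ Ω, (f (s₂⁻¹ * s₁ * x) - f x) ^ 2
        ≤ ∑ x ∈ Ω, (2 * (f (s₂⁻¹ * s₁ * x) - g c₂ (s₂⁻¹ * s₁ * x)) ^ 2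
            + 2 * (g c₁ x - f x) ^ 2) := by
          refine Finset.sum_le_sum fun x _ => ?_
          have e : f (s₂⁻¹ * s₁ * x) - f x
              = (f (s₂⁻¹ * s₁ * x) - g c₂ (s₂⁻¹ * s₁ * x)) + (g c₁ x - f x) := by
            rw [hmid x]; ring
          rw [e]
          nlinarith [sq_nonneg ((f (s₂⁻¹ * s₁ * x) - g c₂ (s₂⁻¹ * s₁ * x)) - (g c₁ x - f x))]
      _ = 2 * ∑ x ∈ Ω, (f (s₂⁻¹ * s₁ * x) - g c₂ (s₂⁻¹ * s₁ * x)) ^ 2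
            + 2 * ∑ x ∈ Ω, (g c₁ x - f x) ^ 2 := by
          rw [Finset.sum_add_distrib, Finset.mul_sum, Finset.mul_sum]
      _ ≤ 2 * thr + 2 * thr := by linarith
      _ = ε ^ 2 * (A.card : ℝ) ^ 2 * B.card := by rw [hthr]; ring
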